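/- Assume B := c_m + c_r + c_d − c > 0, A' := p_m + c_m + c_r + c_d − c ≠ 0, β_H > 0 and a > ε. Then p₂⁽⁵⁾ < p₂⁽⁴⁾ if and only if k > 3f·e_0/B − f·e_0·A'²/(B·β_H·(a−ε)) + ε. (Paper's Proposition 8, retailer two: retailer two's selling price under the combined carbon and recycling reward-penalty mechanism is lower than under the carbon mechanism alone exactly when the unit recycling reward-penalty rate k exceeds the threshold 3f·e_0/(c_m + c_r + c_d − c) − f·e_0·A'²/(β_H·(a−ε)·(c_m + c_r + c_d − c)) + ε.) -/

import Mathlib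

/-- Paper's Proposition 8, retailer two. -/
theorem prop8_retailer_two
    (a p_m c c_d c_r c_m βH ε f e_0 k p₄ p₅ A' B : ℝ)
    (hA' : A' = p_m + c_m + c_r + c_d - c)
    (hB : B = c_m + c_r + c_d - c)
    (hBpos : B > 0) (hA'ne : A' ≠ 0) (hβH : βH > 0) (ha : a > ε)
    (hp₅ : p₅ = p₄ - f * e_0 / (βH * (a - ε)) + (3 * f * e_0 - B * (k - ε)) / A'^2) :
    p₅ < p₄ ↔ k > 3 * f * e_0 / B - f * e_0 * A'^2 / (B * βH * (a - ε)) + ε := by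
  subst hp₅
  have hd : (0:ℝ) < a - ε := sub_pos.mpr ha
  have hA2 : (0:ℝ) < A' ^ 2 := by positivity
  have hden : (0:ℝ) < βH * (a - ε) := by positivity
  have h1 : p₄ - f * e_0 / (βH * (a - ε)) + (3 * f * e_0 - B * (k - ε)) / A'^2 < p₄ ↔
      (3 * f * e_0 - B * (k - ε)) / A'^2 < f * e_0 / (βH * (a - ε)) := by
    constructor <;> intro h <;> linarith
  rw [h1, div_lt_div_iff₀ hA2 hden, gt_iff_lt,
    show 3 * f * e_0 / B - f * e_0 * A'^2 / (B * βH * (a - ε)) + ε =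
      (3 * f * e_0 * (βH * (a - ε)) - f * e_0 * A' ^ 2) / (B * (βH * (a - ε))) + ε from by
        field_simp,
    ← lt_sub_iff_add_lt, div_lt_iff₀ (by positivity)]
  constructor <;> intro h <;> nlinarith [h]
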